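/- arXiv:1908.09881 — 2 statements merged into one kernel-verified Lean document; each statement's English description precedes it below -/
import Mathlib

section
/- Suppose y = α + β S* + ε where E[ε | S̄] = 0, S̄ = E[S* | θ] for some σ-algebra generated by θ, Var(S̄) > 0, and all variables are square-integrable. Then Cov(y, S̄)/Var(S̄) = β. That is, the population OLS slope of y on S̄ equals β. -/
open MeasureTheory ProbabilityTheory

/-- Covariance of two real random variables. -/
noncomputable def cov {Ω : Type*} [MeasurableSpace Ω] (μ : Measure Ω) (f g : Ω → ℝ) : ℝ :=
  ∫ ω, (f ω - ∫ x, f x ∂μ) * (g ω - ∫ x, g x ∂μ) ∂μ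

private lemma memℒp_two_condexp {Ω : Type*} {m m0 : MeasurableSpace Ω}
    (hm : m ≤ m0) (μ : @MeasureTheory.Measure Ω m0) [IsProbabilityMeasure μ] {f : Ω → ℝ}
    (hf : MemLp f 2 μ) : MemLp (μ[f|m]) 2 μ := by
  have hfi : Integrable f μ := hf.integrable one_le_two
  set fL : Lp ℝ 2 μ := hf.toLp f with hfL
  set gL : lpMeas ℝ ℝ m 2 μ := condExpL2 ℝ ℝ hm fL with hgL
  have heq : ((gL : Lp ℝ 2 μ) : Ω → ℝ) =ᵐ[μ] μ[f|m] := by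
    refine ae_eq_condExp_of_forall_setIntegral_eq hm hfi ?_ ?_ ?_
    · intro s _ hμs
      exact integrableOn_Lp_of_measure_ne_top _ fact_one_le_two_ennreal.elim hμs.ne
    · intro s hs hμs
      rw [hgL, integral_condExpL2_eq hm fL hs hμs.ne]
      exact setIntegral_congr_ae (hm s hs)
        (hf.coeFn_toLp.mono fun x hx _ => hx)
    · rw [hgL]; exact aestronglyMeasurable_condExpL2 hm _
  exact (Lp.memLp (gL : Lp ℝ 2 μ)).ae_eq heq

private lemma integrable_mul_of_memℒp_two {Ω : Type*} [MeasurableSpace Ω] {μ : Measure Ω}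
    {f g : Ω → ℝ} (hf : MemLp f 2 μ) (hg : MemLp g 2 μ) :
    Integrable (fun ω => f ω * g ω) μ := by
  have h : MemLp (f • g) 1 μ := hg.smul hf
  exact memLp_one_iff_integrable.mp h

private lemma key {Ω : Type*} {m m' : MeasurableSpace Ω} [m0 : MeasurableSpace Ω]
    (hm : m ≤ m0) (hm' : m' ≤ m0)
    (μ : Measure Ω) [IsProbabilityMeasure μ]
    (Sstar ε y Sbar : Ω → ℝ) (α β : ℝ)
    (hS : MemLp Sstar 2 μ) (hε : MemLp ε 2 μ) (hy : MemLp y 2 μ)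
    (hmodel : ∀ ω, y ω = α + β * Sstar ω + ε ω)
    (hSbar : Sbar = μ[Sstar | m])
    (hSb_sm' : StronglyMeasurable[m'] Sbar)
    (hexo : μ[ε | m'] =ᵐ[μ] fun _ => 0)
    (hvar : 0 < variance Sbar μ) :
    cov μ y Sbar / variance Sbar μ = β := by
  have hSb2 : MemLp Sbar 2 μ := hSbar ▸ memℒp_two_condexp hm μ hS
  have hSbi : Integrable Sbar μ := hSb2.integrable one_le_two
  have hSi : Integrable Sstar μ := hS.integrable one_le_two
  have hεi : Integrable ε μ := hε.integrable one_le_two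
  have hyi : Integrable y μ := hy.integrable one_le_two
  have hSb_sm : StronglyMeasurable[m] Sbar := hSbar ▸ stronglyMeasurable_condExp
  -- E[Sbar] = E[Sstar]
  have hESb : ∫ ω, Sbar ω ∂μ = ∫ ω, Sstar ω ∂μ := by
    rw [hSbar]; exact integral_condExp hm
  -- E[ε] = 0
  have hEε : ∫ ω, ε ω ∂μ = 0 := by
    have h := integral_condExp (μ := μ) (f := ε) hm'
    rw [← h, integral_congr_ae hexo, integral_zero]
  -- ∫ Sbar * ε = 0
  have hSbε : ∫ ω, Sbar ω * ε ω ∂μ = 0 := by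
    have hmul : Integrable (Sbar * ε) μ := integrable_mul_of_memℒp_two hSb2 hε
    have h1 : μ[Sbar * ε | m'] =ᵐ[μ] Sbar * μ[ε | m'] :=
      condExp_mul_of_stronglyMeasurable_left hSb_sm' hmul hεi
    have h2 : μ[Sbar * ε | m'] =ᵐ[μ] fun _ => (0 : ℝ) := by
      refine h1.trans ?_
      filter_upwards [hexo] with ω hω
      simp [Pi.mul_apply, hω]
    have h3 : ∫ ω, (μ[Sbar * ε | m']) ω ∂μ = ∫ ω, (Sbar * ε) ω ∂μ :=
      integral_condExp hm'
    calc ∫ ω, Sbar ω * ε ω ∂μ = ∫ ω, (μ[Sbar * ε | m']) ω ∂μ := h3.symm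
      _ = ∫ _ω, (0 : ℝ) ∂μ := integral_congr_ae h2
      _ = 0 := integral_zero _ _
  -- ∫ Sbar * Sstar = ∫ Sbar * Sbar
  have hSbS : ∫ ω, Sbar ω * Sstar ω ∂μ = ∫ ω, Sbar ω * Sbar ω ∂μ := by
    have hmul : Integrable (Sbar * Sstar) μ := integrable_mul_of_memℒp_two hSb2 hS
    have h1 : μ[Sbar * Sstar | m] =ᵐ[μ] Sbar * μ[Sstar | m] :=
      condExp_mul_of_stronglyMeasurable_left hSb_sm hmul hSi
    have h2 : μ[Sbar * Sstar | m] =ᵐ[μ] fun ω => Sbar ω * Sbar ω := by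
      refine h1.trans ?_
      rw [← hSbar]
      exact Filter.Eventually.of_forall fun ω => rfl
    have h3 : ∫ ω, (μ[Sbar * Sstar | m]) ω ∂μ = ∫ ω, (Sbar * Sstar) ω ∂μ :=
      integral_condExp hm
    calc ∫ ω, Sbar ω * Sstar ω ∂μ = ∫ ω, (μ[Sbar * Sstar | m]) ω ∂μ := h3.symm
      _ = ∫ ω, Sbar ω * Sbar ω ∂μ := integral_congr_ae h2
  -- variance of Sbar
  have hVar : variance Sbar μ = ∫ ω, Sbar ω * Sbar ω ∂μ - (∫ ω, Sbar ω ∂μ) ^ 2 := by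
    rw [variance_eq_sub hSb2]
    congr 1
    exact integral_congr_ae (Filter.Eventually.of_forall fun ω => by
      simp [Pi.pow_apply, sq])
  -- abbreviations
  have hyint : Integrable (fun ω => y ω * Sbar ω) μ := integrable_mul_of_memℒp_two hy hSb2
  have hSSbint : Integrable (fun ω => Sbar ω * Sstar ω) μ :=
    integrable_mul_of_memℒp_two hSb2 hS
  have hSbεint : Integrable (fun ω => Sbar ω * ε ω) μ :=
    integrable_mul_of_memℒp_two hSb2 hε
  set a : ℝ := ∫ ω, y ω ∂μ with ha
  set b : ℝ := ∫ ω, Sbar ω ∂μ with hb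
  -- expand cov μ y Sbar
  have hcov : cov μ y Sbar = ∫ ω, y ω * Sbar ω ∂μ - a * b := by
    have i1 : Integrable (fun ω => y ω * Sbar ω - a * Sbar ω) μ :=
      hyint.sub (hSbi.const_mul a)
    have i2 : Integrable (fun ω => y ω * Sbar ω - a * Sbar ω - b * y ω) μ :=
      i1.sub (hyi.const_mul b)
    have e0 : cov μ y Sbar
        = ∫ ω, (y ω * Sbar ω - a * Sbar ω - b * y ω) + a * b ∂μ := by
      rw [cov]
      refine integral_congr_ae (Filter.Eventually.of_forall fun ω => ?_)
      rw [← ha, ← hb]; ring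
    have e1 : ∫ ω, (y ω * Sbar ω - a * Sbar ω - b * y ω) + a * b ∂μ
        = (∫ ω, y ω * Sbar ω - a * Sbar ω - b * y ω ∂μ) + ∫ _ω, a * b ∂μ :=
      integral_add i2 (integrable_const _)
    have e2 : ∫ ω, y ω * Sbar ω - a * Sbar ω - b * y ω ∂μ
        = (∫ ω, y ω * Sbar ω - a * Sbar ω ∂μ) - ∫ ω, b * y ω ∂μ :=
      integral_sub i1 (hyi.const_mul b)
    have e3 : ∫ ω, y ω * Sbar ω - a * Sbar ω ∂μ
        = (∫ ω, y ω * Sbar ω ∂μ) - ∫ ω, a * Sbar ω ∂μ :=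
      integral_sub hyint (hSbi.const_mul a)
    rw [e0, e1, e2, e3, integral_const_mul, integral_const_mul, integral_const, probReal_univ,
      one_smul, ← ha, ← hb]
    ring
  -- compute ∫ y * Sbar
  have hySb : ∫ ω, y ω * Sbar ω ∂μ = α * b + β * ∫ ω, Sbar ω * Sbar ω ∂μ := by
    have e0 : ∫ ω, y ω * Sbar ω ∂μ
        = ∫ ω, (α * Sbar ω + β * (Sbar ω * Sstar ω)) + Sbar ω * ε ω ∂μ := by
      refine integral_congr_ae (Filter.Eventually.of_forall fun ω => ?_)
      show y ω * Sbar ω = α * Sbar ω + β * (Sbar ω * Sstar ω) + Sbar ω * ε ω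
      rw [hmodel ω]; ring
    have e1 : ∫ ω, (α * Sbar ω + β * (Sbar ω * Sstar ω)) + Sbar ω * ε ω ∂μ
        = (∫ ω, α * Sbar ω + β * (Sbar ω * Sstar ω) ∂μ) + ∫ ω, Sbar ω * ε ω ∂μ :=
      integral_add ((hSbi.const_mul α).add (hSSbint.const_mul β)) hSbεint
    have e2 : ∫ ω, α * Sbar ω + β * (Sbar ω * Sstar ω) ∂μ
        = (∫ ω, α * Sbar ω ∂μ) + ∫ ω, β * (Sbar ω * Sstar ω) ∂μ :=
      integral_add (hSbi.const_mul α) (hSSbint.const_mul β)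
    rw [e0, e1, e2, integral_const_mul, integral_const_mul, hSbε, hSbS, ← hb]
    ring
  -- compute E[y]
  have hEy : a = α + β * b := by
    have e0 : ∫ ω, y ω ∂μ = ∫ ω, (α + β * Sstar ω) + ε ω ∂μ := by
      refine integral_congr_ae (Filter.Eventually.of_forall fun ω => ?_)
      show y ω = α + β * Sstar ω + ε ω
      rw [hmodel ω]
    have e1 : ∫ ω, (α + β * Sstar ω) + ε ω ∂μ
        = (∫ ω, α + β * Sstar ω ∂μ) + ∫ ω, ε ω ∂μ :=
      integral_add ((integrable_const α).add (hSi.const_mul β)) hεi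
    have e2 : ∫ ω, α + β * Sstar ω ∂μ
        = (∫ _ω, α ∂μ) + ∫ ω, β * Sstar ω ∂μ :=
      integral_add (integrable_const α) (hSi.const_mul β)
    rw [ha, e0, e1, e2, integral_const_mul, integral_const, probReal_univ,
      one_smul, hEε, ← hESb]
    ring
  -- conclude
  have hfinal : cov μ y Sbar = β * variance Sbar μ := by
    rw [hcov, hySb, hEy, hVar]
    ring
  rw [hfinal, mul_div_assoc, div_self hvar.ne', mul_one]

/-- Proposition 2, part 1: if `y = α + β S* + ε` with `E[ε | S̄] = 0`, where
`S̄ = E[S* | σ(θ)]`, then the population OLS slope of `y` on `S̄` equals `β`. -/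
theorem stmt_7 {Ω E : Type*} [MeasurableSpace Ω] [MeasurableSpace E]
    (μ : Measure Ω) [IsProbabilityMeasure μ]
    (θ : Ω → E) (hθ : Measurable θ)
    (Sstar ε y : Ω → ℝ) (α β : ℝ)
    (hS : MemLp Sstar 2 μ) (hε : MemLp ε 2 μ) (hy : MemLp y 2 μ)
    (hmodel : ∀ ω, y ω = α + β * Sstar ω + ε ω)
    (Sbar : Ω → ℝ)
    (hSbar : Sbar = μ[Sstar | MeasurableSpace.comap θ inferInstance])
    (hexo : μ[ε | MeasurableSpace.comap Sbar inferInstance] =ᵐ[μ] fun _ => 0)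
    (hvar : 0 < variance Sbar μ) :
    cov μ y Sbar / variance Sbar μ = β := by
  have hm : MeasurableSpace.comap θ inferInstance ≤ _ := hθ.comap_le
  have hSb_meas : Measurable Sbar := by
    rw [hSbar]
    exact (stronglyMeasurable_condExp.mono hm).measurable
  have hm' : MeasurableSpace.comap Sbar inferInstance ≤ _ := hSb_meas.comap_le
  have hSb_sm' : StronglyMeasurable[MeasurableSpace.comap Sbar inferInstance] Sbar := by
    have h : @Measurable Ω ℝ (MeasurableSpace.comap Sbar inferInstance) _ Sbar :=
      measurable_iff_comap_le.mpr le_rfl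
    exact h.stronglyMeasurable
  exact key hm hm' μ Sstar ε y Sbar α β hS hε hy hmodel hSbar hSb_sm' hexo hvar
end

section
/- If Y is a Poisson random variable with mean λ > 0, then the random variable Y log Y - E[Y log Y] (with the convention 0 log 0 = 0) is sub-exponential: there exist constants ν, b > 0 such that E[exp(θ(Y log Y - E[Y log Y]))] ≤ exp(ν²θ²/2) for all |θ| ≤ 1/b. -/
set_option maxHeartbeats 1000000

open MeasureTheory Real

private lemma exp_le_aux (u : ℝ) : exp u ≤ 1 + u + u ^ 2 * exp |u| := by
  rcases le_or_gt 0 u with hu | hu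
  · rw [abs_of_nonneg hu]
    have h1 : -u + 1 ≤ exp (-u) := add_one_le_exp (-u)
    have h3 : (-u + 1) * exp u ≤ 1 := by
      calc (-u + 1) * exp u ≤ exp (-u) * exp u :=
        mul_le_mul_of_nonneg_right h1 (exp_pos u).le
      _ = 1 := by rw [← exp_add]; simp
    have h4 : exp u - 1 ≤ u * exp u := by nlinarith
    nlinarith [mul_le_mul_of_nonneg_left h4 hu, exp_pos u]
  · rw [abs_of_neg hu]
    set t := exp (-u) with ht'
    have ht : 0 < t := exp_pos (-u)
    have h1 : -u + 1 ≤ t := add_one_le_exp (-u)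
    have hd : 0 ≤ t - (1 - u) := by linarith
    have hC : 0 ≤ 1 + u + 2*u^2 - 2*u^3 := by
      nlinarith [sq_nonneg (4*u+1), mul_nonneg (mul_nonneg (neg_pos.mpr hu).le (neg_pos.mpr hu).le) (neg_pos.mpr hu).le]
    have h6 : 0 ≤ (t - (1 - u)) * (1 + u + 2*u^2 - 2*u^3) := mul_nonneg hd hC
    have h7 : 0 ≤ u^2 * (t - (1-u))^2 := mul_nonneg (sq_nonneg u) (sq_nonneg _)
    have h8 : 0 ≤ u^4 - 2*u^3 := by nlinarith [sq_nonneg u, mul_nonneg (mul_nonneg (neg_pos.mpr hu).le (neg_pos.mpr hu).le) (neg_pos.mpr hu).le]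
    have h5 : 1 ≤ (1 + u + u ^ 2 * t) * t := by nlinarith [h6, h7, h8]
    have he : exp u = 1 / t := by
      rw [eq_div_iff ht.ne', ← exp_add]; simp
    rw [he, div_le_iff₀ ht]
    linarith [h5]


private lemma summable_half_fact (B : ℝ) :
    Summable (fun m : ℕ => B ^ m / (Nat.factorial (m / 2) : ℝ)) := by
  apply Summable.even_add_odd
  · have h : ∀ k : ℕ, B ^ (2 * k) / (Nat.factorial ((2 * k) / 2) : ℝ)
        = (B ^ 2) ^ k / (Nat.factorial k : ℝ) := by
      intro k
      have h2 : (2 * k) / 2 = k := by omega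
      rw [pow_mul, h2]
    simp only [h]
    exact Real.summable_pow_div_factorial (B ^ 2)
  · have h : ∀ k : ℕ, B ^ (2 * k + 1) / (Nat.factorial ((2 * k + 1) / 2) : ℝ)
        = B * ((B ^ 2) ^ k / (Nat.factorial k : ℝ)) := by
      intro k
      have h2 : (2 * k + 1) / 2 = k := by omega
      rw [pow_succ, pow_mul, h2]; ring
    simp only [h]
    exact (Real.summable_pow_div_factorial (B ^ 2)).mul_left B

private lemma integrable_of_summable {Ω : Type*} [MeasurableSpace Ω] (μ : Measure Ω)
    (Y : Ω → ℕ) (hmeas : Measurable Y) (p : ℕ → ℝ)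
    (hlaw : ∀ m, μ {ω | Y ω = m} = ENNReal.ofReal (p m)) (hp : ∀ m, 0 ≤ p m)
    (g : ℕ → ℝ) (hs : Summable fun m => |g m| * p m) :
    Integrable (fun ω => g (Y ω)) μ := by
  have hg : Measurable g := measurable_from_top
  constructor
  · exact ((hg.comp hmeas).aestronglyMeasurable)
  · rw [MeasureTheory.HasFiniteIntegral]
    have hmap : ∀ m : ℕ, (μ.map Y) {m} = ENNReal.ofReal (p m) := by
      intro m
      rw [Measure.map_apply hmeas (measurableSet_singleton m)]
      have h : Y ⁻¹' {m} = {ω | Y ω = m} := rfl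
      rw [h, hlaw]
    calc ∫⁻ ω, ‖g (Y ω)‖₊ ∂μ = ∫⁻ n, ‖g n‖₊ ∂(μ.map Y) :=
          (lintegral_map (f := fun n => (‖g n‖₊ : ENNReal)) measurable_from_top hmeas).symm
      _ = ∑' n, (‖g n‖₊ : ENNReal) * (μ.map Y) {n} := lintegral_countable' _
      _ = ∑' n, ENNReal.ofReal (|g n| * p n) := by
          congr 1; funext n
          rw [hmap, ← enorm_eq_nnnorm, Real.enorm_eq_ofReal_abs, ← ENNReal.ofReal_mul (abs_nonneg _)]
      _ = ENNReal.ofReal (∑' n, |g n| * p n) :=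
          (ENNReal.ofReal_tsum_of_nonneg (fun n => mul_nonneg (abs_nonneg _) (hp n)) hs).symm
      _ < ⊤ := ENNReal.ofReal_lt_top

private lemma fact_bound (m : ℕ) :
    (m / 2).factorial * (m / 2) ^ (m / 2) ≤ m.factorial := by
  set k := m / 2 with hk
  calc k.factorial * k ^ k ≤ k.factorial * (k + 1) ^ (m - k) := by
        apply Nat.mul_le_mul_left
        calc k ^ k ≤ (k + 1) ^ k := Nat.pow_le_pow_left (Nat.le_succ k) k
          _ ≤ (k + 1) ^ (m - k) := Nat.pow_le_pow_right (Nat.succ_pos k) (by omega)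
    _ ≤ (k + (m - k)).factorial := Nat.factorial_mul_pow_le_factorial
    _ = m.factorial := by congr 1; omega

private lemma exp_half_le (m : ℕ) (hm : 1 ≤ m) :
    exp ((m : ℝ) * log m / 2) ≤ (m : ℝ) ^ (m / 2 + 1) := by
  have hm1 : (1 : ℝ) ≤ (m : ℝ) := by exact_mod_cast hm
  have hlog : 0 ≤ log m := Real.log_nonneg hm1
  have hle : (m : ℝ) * log m / 2 ≤ ((m / 2 + 1 : ℕ) : ℝ) * log m := by
    have h2 : (m : ℝ) ≤ 2 * ((m / 2 : ℕ) : ℝ) + 2 := by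
      exact_mod_cast (by omega : m ≤ 2 * (m / 2) + 2)
    have := mul_le_mul_of_nonneg_right (by push_cast; linarith : (m : ℝ) / 2 ≤ ((m / 2 + 1 : ℕ) : ℝ)) hlog
    calc (m : ℝ) * log m / 2 = (m : ℝ) / 2 * log m := by ring
      _ ≤ _ := this
  calc exp ((m : ℝ) * log m / 2) ≤ exp (((m / 2 + 1 : ℕ) : ℝ) * log m) := exp_le_exp.mpr hle
    _ = (m : ℝ) ^ (m / 2 + 1) := by
        rw [Real.exp_nat_mul, Real.exp_log (by linarith)]

private lemma summable_main (lam c : ℝ) (hlam : 0 < lam) :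
    Summable (fun m : ℕ => ((m : ℝ) * log m - c) ^ 2 * exp (|(m : ℝ) * log m - c| / 2)
      * (exp (-lam) * lam ^ m / (m.factorial : ℝ))) := by
  set c' := |c| with hc'def
  have hc' : 0 ≤ c' := abs_nonneg c
  set K := (1 + c') ^ 2 * exp (c' / 2) with hKdef
  have hK : 0 < K := by positivity
  set B := 96 * lam + 1 with hBdef
  have hB0 : (0:ℝ) ≤ 96 * lam := by linarith
  have hB1 : (1:ℝ) ≤ B := by simp [hBdef]; linarith
  apply Summable.of_nonneg_of_le _ _ ((summable_half_fact B).mul_left K)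
  · intro m; positivity
  · intro m
    set fm := (m : ℝ) * log m with hfm
    have hf0 : 0 ≤ fm := by
      rcases Nat.eq_zero_or_pos m with h | h
      · simp [hfm, h]
      · exact mul_nonneg (Nat.cast_nonneg m) (Real.log_nonneg (by exact_mod_cast h))
    have habs : |fm - c| ≤ fm + c' := by
      calc |fm - c| ≤ |fm| + |c| := abs_sub _ _
        _ = fm + c' := by rw [abs_of_nonneg hf0]
    have h1 : (fm - c) ^ 2 ≤ (fm + c') ^ 2 := by
      rw [← sq_abs (fm - c)]
      exact pow_le_pow_left₀ (abs_nonneg _) habs 2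
    have h2 : exp (|fm - c| / 2) ≤ exp (c' / 2) * exp (fm / 2) := by
      rw [← Real.exp_add]
      exact exp_le_exp.mpr (by linarith)
    rcases Nat.eq_zero_or_pos m with hm | hm
    · -- m = 0 case
      subst hm
      have hfm0 : fm = 0 := by simp [hfm]
      simp only [hfm0, pow_zero, Nat.factorial_zero]
      rw [hfm0] at habs
      have : (0 - c)^2 * exp (|0 - c|/2) ≤ (1 + c')^2 * exp (c'/2) := by
        apply mul_le_mul _ _ (by positivity) (by positivity)
        · nlinarith [sq_abs c, abs_nonneg c]
        · apply exp_le_exp.mpr; simp only [zero_sub, abs_neg]; linarith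
      have hexpl : exp (-lam) ≤ 1 := exp_le_one_iff.mpr (by linarith)
      calc (0 - c)^2 * exp (|0 - c|/2) * (exp (-lam) * lam ^ 0 / ((Nat.factorial 0 : ℕ) : ℝ))
          ≤ (1 + c')^2 * exp (c'/2) * 1 := by
            apply mul_le_mul this _ (by positivity) (by positivity)
            simp [Nat.factorial_zero]; linarith
        _ ≤ K * (B ^ 0 / ((Nat.factorial (0/2) : ℕ) : ℝ)) := by
            simp [hKdef, Nat.factorial_zero]
    · -- m ≥ 1
      set k := m / 2 with hkdef
      have hm1 : (1:ℝ) ≤ (m:ℝ) := by exact_mod_cast hm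
      have hlogm : log (m:ℝ) ≤ (m:ℝ) := by
        have := Real.log_le_sub_one_of_pos (by linarith : (0:ℝ) < m)
        linarith
      have hpoly : fm + c' ≤ (1 + c') * (m:ℝ)^2 := by
        have hfm2 : fm ≤ (m:ℝ)^2 := by
          rw [hfm, sq]
          exact mul_le_mul_of_nonneg_left hlogm (by linarith)
        have hc2 : c' ≤ c' * (m:ℝ)^2 := le_mul_of_one_le_right hc' (by nlinarith)
        nlinarith
      have h1' : (fm - c) ^ 2 ≤ (1 + c')^2 * (m:ℝ)^4 := by
        calc (fm - c)^2 ≤ (fm + c')^2 := h1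
          _ ≤ ((1 + c') * (m:ℝ)^2)^2 := pow_le_pow_left₀ (by linarith) hpoly 2
          _ = (1 + c')^2 * (m:ℝ)^4 := by ring
      have hfact : ((k.factorial * k ^ k : ℕ) : ℝ) ≤ (m.factorial : ℝ) := by
        exact_mod_cast fact_bound m
      have hexp : exp (fm / 2) ≤ (m:ℝ) ^ (k + 1) := exp_half_le m hm
      have hmpow : (m:ℝ) ^ (k + 1) ≤ (m:ℝ) * ((3 * k : ℕ) : ℝ) ^ k := by
        rcases Nat.eq_zero_or_pos k with hk0 | hk0
        · simp [hk0, pow_succ, pow_zero]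
        · have hm3k : (m:ℝ) ≤ ((3 * k : ℕ) : ℝ) := by
            exact_mod_cast (by omega : m ≤ 3 * k)
          calc (m:ℝ)^(k+1) = (m:ℝ) * (m:ℝ)^k := by ring
            _ ≤ (m:ℝ) * ((3 * k : ℕ) : ℝ) ^ k :=
                mul_le_mul_of_nonneg_left (pow_le_pow_left₀ (by linarith) hm3k k) (by linarith)
      have hkk : (0:ℝ) < ((k.factorial * k ^ k : ℕ) : ℝ) := by
        have hkpos : 0 < k ^ k := by
          rcases Nat.eq_zero_or_pos k with h | h
          · simp [h]
          · exact Nat.pow_pos h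
        have : 0 < k.factorial * k ^ k := Nat.mul_pos k.factorial_pos hkpos
        exact_mod_cast this
      have hexpl : exp (-lam) ≤ 1 := exp_le_one_iff.mpr (by linarith)
      have hdiv : exp (fm / 2) * (exp (-lam) * lam ^ m) / (m.factorial : ℝ)
          ≤ (m:ℝ) * ((3 * k : ℕ) : ℝ) ^ k * lam ^ m / ((k.factorial * k ^ k : ℕ) : ℝ) := by
        have hnum : exp (fm / 2) * (exp (-lam) * lam ^ m)
            ≤ (m:ℝ) * ((3 * k : ℕ) : ℝ) ^ k * lam ^ m := by
          have h1n : exp (-lam) * lam ^ m ≤ lam ^ m := by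
            nlinarith [pow_pos hlam m]
          calc exp (fm / 2) * (exp (-lam) * lam ^ m) ≤ ((m:ℝ) * ((3 * k : ℕ) : ℝ) ^ k) * lam ^ m := by
                apply mul_le_mul (hexp.trans hmpow) h1n (by positivity) (by positivity)
            _ = (m:ℝ) * ((3 * k : ℕ) : ℝ) ^ k * lam ^ m := by ring
        have hd : (0:ℝ) < ((k.factorial * k ^ k : ℕ) : ℝ) := hkk
        calc exp (fm / 2) * (exp (-lam) * lam ^ m) / (m.factorial : ℝ)
            ≤ ((m:ℝ) * ((3 * k : ℕ) : ℝ) ^ k * lam ^ m) / (m.factorial : ℝ) := by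
              gcongr
          _ ≤ (m:ℝ) * ((3 * k : ℕ) : ℝ) ^ k * lam ^ m / ((k.factorial * k ^ k : ℕ) : ℝ) :=
              div_le_div_of_nonneg_left (by positivity) hd hfact
      have hceq : (m:ℝ) * ((3 * k : ℕ) : ℝ) ^ k * lam ^ m / ((k.factorial * k ^ k : ℕ) : ℝ)
          = (m:ℝ) * 3 ^ k * lam ^ m / (k.factorial : ℝ) := by
        have hkkne : ((k:ℝ) ^ k) ≠ 0 := by
          rcases Nat.eq_zero_or_pos k with h | h
          · simp [h]
          · positivity
        calc (m:ℝ) * ((3 * k : ℕ) : ℝ) ^ k * lam ^ m / ((k.factorial * k ^ k : ℕ) : ℝ)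
            = ((m:ℝ) * 3 ^ k * lam ^ m) * (k:ℝ) ^ k / ((k.factorial : ℝ) * (k:ℝ) ^ k) := by
              push_cast
              rw [mul_pow]
              ring_nf
          _ = (m:ℝ) * 3 ^ k * lam ^ m / (k.factorial : ℝ) := by
              rw [mul_div_mul_right _ _ hkkne]
      have hm2 : (m:ℝ) ≤ 2 ^ m := by
        exact_mod_cast (Nat.lt_two_pow_self (n := m)).le
      have hfin : (m:ℝ) ^ 4 * ((m:ℝ) * 3 ^ k * lam ^ m) ≤ B ^ m := by
        have h32 : ((2:ℝ) ^ m) ^ 5 = 32 ^ m := by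
          rw [← pow_mul, mul_comm, pow_mul]; norm_num
        have hA : (m:ℝ) ^ 4 * ((m:ℝ) * 3 ^ k * lam ^ m) ≤ 32 ^ m * (3 ^ m * lam ^ m) := by
          have h5 : (m:ℝ) ^ 4 * (m:ℝ) ≤ 32 ^ m := by
            calc (m:ℝ) ^ 4 * (m:ℝ) = (m:ℝ) ^ 5 := by ring
              _ ≤ ((2:ℝ) ^ m) ^ 5 := pow_le_pow_left₀ (by linarith) hm2 5
              _ = 32 ^ m := h32
          have h3 : (3:ℝ) ^ k ≤ 3 ^ m := pow_le_pow_right₀ (by norm_num) (by omega)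
          calc (m:ℝ) ^ 4 * ((m:ℝ) * 3 ^ k * lam ^ m)
              = ((m:ℝ) ^ 4 * (m:ℝ)) * (3 ^ k * lam ^ m) := by ring
            _ ≤ 32 ^ m * (3 ^ m * lam ^ m) := by
                apply mul_le_mul h5 ?_ (by positivity) (by positivity)
                exact mul_le_mul_of_nonneg_right h3 (by positivity)
        calc (m:ℝ) ^ 4 * ((m:ℝ) * 3 ^ k * lam ^ m) ≤ 32 ^ m * (3 ^ m * lam ^ m) := hA
          _ = (96 * lam) ^ m := by
              rw [show (96:ℝ) * lam = 32 * (3 * lam) by ring]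
              rw [mul_pow 32 (3*lam) m]
              try rw [mul_pow 3 lam m]
          _ ≤ B ^ m := pow_le_pow_left₀ hB0 (by simp only [hBdef]; linarith) m
      calc (fm - c) ^ 2 * exp (|fm - c| / 2) * (exp (-lam) * lam ^ m / (m.factorial : ℝ))
          ≤ ((1 + c') ^ 2 * (m:ℝ) ^ 4) * (exp (c' / 2) * exp (fm / 2))
              * (exp (-lam) * lam ^ m / (m.factorial : ℝ)) := by
            apply mul_le_mul_of_nonneg_right _ (by positivity)
            exact mul_le_mul h1' h2 (by positivity) (by positivity)
        _ = K * ((m:ℝ) ^ 4 * (exp (fm / 2) * (exp (-lam) * lam ^ m) / (m.factorial : ℝ))) := by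
            rw [hKdef]; ring
        _ ≤ K * ((m:ℝ) ^ 4 * ((m:ℝ) * 3 ^ k * lam ^ m / (k.factorial : ℝ))) := by
            apply mul_le_mul_of_nonneg_left _ hK.le
            apply mul_le_mul_of_nonneg_left _ (by positivity)
            exact hdiv.trans_eq hceq
        _ = K * (((m:ℝ) ^ 4 * ((m:ℝ) * 3 ^ k * lam ^ m)) / (k.factorial : ℝ)) := by ring
        _ ≤ K * (B ^ m / (k.factorial : ℝ)) := by
            apply mul_le_mul_of_nonneg_left _ hK.le
            gcongr


/-- The `Y log Y` term of the Poisson log-likelihood is sub-exponential: if `Y` is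
Poisson(λ), there exist `ν, b > 0` such that the centered variable
`Y log Y - E[Y log Y]` satisfies the sub-exponential MGF bound for `|θ| ≤ 1/b`.
(Here `0 log 0 = 0`, which is the convention of `Real.log`.) -/
theorem stmt_13 {Ω : Type*} [MeasurableSpace Ω] (μ : Measure Ω) [IsProbabilityMeasure μ]
    (lam : ℝ) (hlam : 0 < lam)
    (Y : Ω → ℕ) (hmeas : Measurable Y)
    (hlaw : ∀ m : ℕ,
      μ {ω : Ω | Y ω = m} = ENNReal.ofReal (exp (-lam) * lam ^ m / m.factorial)) :
    ∃ ν > (0 : ℝ), ∃ b > (0 : ℝ), ∀ θ : ℝ, |θ| ≤ 1 / b →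
      ∫ ω, exp (θ * ((Y ω : ℝ) * log (Y ω) -
          ∫ x, ((Y x : ℝ) * log (Y x)) ∂μ)) ∂μ ≤ exp (ν ^ 2 * θ ^ 2 / 2) := by
  classical
  set p : ℕ → ℝ := fun m => exp (-lam) * lam ^ m / m.factorial with hpdef
  have hp : ∀ m, 0 ≤ p m := fun m => by
    have := hlam.le
    positivity
  set c : ℝ := ∫ x, ((Y x : ℝ) * log (Y x)) ∂μ with hcdef
  -- summability for the quadratic-exponential function
  have hs2 : Summable (fun m : ℕ =>
      |((m:ℝ) * log m - c) ^ 2 * exp (|(m:ℝ) * log m - c| / 2)| * p m) := by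
    apply (summable_main lam c hlam).congr
    intro m
    rw [abs_of_nonneg (a := ((m:ℝ) * log m - c) ^ 2 * exp (|(m:ℝ) * log m - c| / 2))
      (by positivity)]
  have I2 : Integrable (fun ω =>
      ((Y ω : ℝ) * log (Y ω) - c) ^ 2 * exp (|(Y ω : ℝ) * log (Y ω) - c| / 2)) μ :=
    integrable_of_summable μ Y hmeas p hlaw hp
      (fun m => ((m:ℝ) * log m - c) ^ 2 * exp (|(m:ℝ) * log m - c| / 2)) hs2
  have hsp : Summable p := by
    apply ((Real.summable_pow_div_factorial lam).mul_left (exp (-lam))).congr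
    intro m
    simp only [hpdef, mul_div_assoc]
  have hs1 : Summable (fun m : ℕ => |(m:ℝ) * log m| * p m) := by
    refine Summable.of_nonneg_of_le
      (fun m => mul_nonneg (abs_nonneg _) (hp m)) (fun m => ?_)
      ((hsp.mul_left (1 + |c|)).add (summable_main lam c hlam))
    · show |(m:ℝ) * log m| * p m ≤ (1 + |c|) * p m +
        (((m:ℝ) * log m - c) ^ 2 * exp (|(m:ℝ) * log m - c| / 2)) * p m
      have hb : |(m:ℝ) * log m| ≤ (1 + |c|) +
          ((m:ℝ) * log m - c) ^ 2 * exp (|(m:ℝ) * log m - c| / 2) := by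
        set y := (m:ℝ) * log m - c with hy
        clear_value y
        have h1 : |(m:ℝ) * log m| ≤ |y| + |c| := by
          have hyc : (m:ℝ) * log m = y + c := by rw [hy]; ring
          rw [hyc]
          exact abs_add_le _ _
        have h2 : |y| ≤ 1 + y ^ 2 := by nlinarith [sq_abs y, sq_nonneg (|y| - 1), abs_nonneg y]
        have h3 : y ^ 2 ≤ y ^ 2 * exp (|y| / 2) := by
          nlinarith [Real.one_le_exp (by positivity : (0:ℝ) ≤ |y| / 2), sq_nonneg y]
        linarith
      calc |(m:ℝ) * log m| * p m
          ≤ ((1 + |c|) + ((m:ℝ) * log m - c) ^ 2 * exp (|(m:ℝ) * log m - c| / 2)) * p m :=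
            mul_le_mul_of_nonneg_right hb (hp m)
        _ = (1 + |c|) * p m +
            (((m:ℝ) * log m - c) ^ 2 * exp (|(m:ℝ) * log m - c| / 2)) * p m := by ring
  have I1 : Integrable (fun ω => (Y ω : ℝ) * log (Y ω)) μ :=
    integrable_of_summable μ Y hmeas p hlaw hp (fun m => (m:ℝ) * log m) hs1
  have IX : Integrable (fun ω => (Y ω : ℝ) * log (Y ω) - c) μ := I1.sub (integrable_const c)
  have Imean : ∫ ω, ((Y ω : ℝ) * log (Y ω) - c) ∂μ = 0 := by
    rw [integral_sub I1 (integrable_const c), integral_const, probReal_univ]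
    simp [← hcdef]
  set C : ℝ := ∫ ω, ((Y ω : ℝ) * log (Y ω) - c) ^ 2 * exp (|(Y ω : ℝ) * log (Y ω) - c| / 2) ∂μ
    with hCdef
  have hC0 : 0 ≤ C := integral_nonneg fun ω => by positivity
  refine ⟨Real.sqrt (2 * C + 2), Real.sqrt_pos.mpr (by linarith), 2, by norm_num, ?_⟩
  intro θ hθ
  have hθ' : |θ| ≤ 1 / 2 := by norm_num at hθ ⊢; linarith
  have hpt : ∀ ω, exp (θ * ((Y ω : ℝ) * log (Y ω) - c))
      ≤ 1 + θ * ((Y ω : ℝ) * log (Y ω) - c) +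
        θ ^ 2 * (((Y ω : ℝ) * log (Y ω) - c) ^ 2 * exp (|(Y ω : ℝ) * log (Y ω) - c| / 2)) := by
    intro ω
    set x := (Y ω : ℝ) * log (Y ω) - c with hx
    clear_value x
    have h := exp_le_aux (θ * x)
    have habs2 : |θ * x| ≤ |x| / 2 := by
      rw [abs_mul]
      calc |θ| * |x| ≤ (1/2) * |x| := mul_le_mul_of_nonneg_right hθ' (abs_nonneg x)
        _ = |x| / 2 := by ring
    have hsq : (θ * x) ^ 2 * exp |θ * x| ≤ θ ^ 2 * (x ^ 2 * exp (|x| / 2)) := by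
      calc (θ * x) ^ 2 * exp |θ * x| = θ ^ 2 * x ^ 2 * exp |θ * x| := by ring
        _ ≤ θ ^ 2 * x ^ 2 * exp (|x| / 2) :=
            mul_le_mul_of_nonneg_left (exp_le_exp.mpr habs2) (by positivity)
        _ = θ ^ 2 * (x ^ 2 * exp (|x| / 2)) := by ring
    linarith
  have hRHS : Integrable (fun ω => 1 + θ * ((Y ω : ℝ) * log (Y ω) - c) +
      θ ^ 2 * (((Y ω : ℝ) * log (Y ω) - c) ^ 2 * exp (|(Y ω : ℝ) * log (Y ω) - c| / 2))) μ :=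
    ((integrable_const 1).add (IX.const_mul θ)).add (I2.const_mul (θ ^ 2))
  have hint : ∫ ω, (1 + θ * ((Y ω : ℝ) * log (Y ω) - c) +
      θ ^ 2 * (((Y ω : ℝ) * log (Y ω) - c) ^ 2 * exp (|(Y ω : ℝ) * log (Y ω) - c| / 2))) ∂μ
      = 1 + θ ^ 2 * C := by
    have hA : Integrable (fun _ : Ω => (1:ℝ)) μ := integrable_const 1
    have hB : Integrable (fun ω => θ * ((Y ω : ℝ) * log (Y ω) - c)) μ := by
      exact IX.const_mul θ
    have hG : Integrable (fun ω => θ ^ 2 * (((Y ω : ℝ) * log (Y ω) - c) ^ 2 *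
        exp (|(Y ω : ℝ) * log (Y ω) - c| / 2))) μ := by
      exact I2.const_mul (θ ^ 2)
    have hAB : Integrable (fun ω => 1 + θ * ((Y ω : ℝ) * log (Y ω) - c)) μ := by
      exact hA.add hB
    rw [integral_add hAB hG, integral_add hA hB,
      integral_const, probReal_univ, integral_const_mul, integral_const_mul, Imean]
    rw [← hCdef]
    simp
  calc ∫ ω, exp (θ * ((Y ω : ℝ) * log (Y ω) - c)) ∂μ
      ≤ ∫ ω, (1 + θ * ((Y ω : ℝ) * log (Y ω) - c) +
          θ ^ 2 * (((Y ω : ℝ) * log (Y ω) - c) ^ 2 *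
            exp (|(Y ω : ℝ) * log (Y ω) - c| / 2))) ∂μ :=
        integral_mono_of_nonneg (Filter.Eventually.of_forall fun ω => (exp_pos _).le)
          hRHS (Filter.Eventually.of_forall hpt)
    _ = 1 + θ ^ 2 * C := hint
    _ ≤ exp (θ ^ 2 * C) := by linarith [add_one_le_exp (θ ^ 2 * C)]
    _ ≤ exp (Real.sqrt (2 * C + 2) ^ 2 * θ ^ 2 / 2) := by
        rw [Real.sq_sqrt (by linarith : (0:ℝ) ≤ 2 * C + 2)]
        apply exp_le_exp.mpr
        nlinarith [sq_nonneg θ]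
end
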